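/- arXiv:1310.2740 — 2 statements merged into one kernel-verified Lean document; each statement's English description precedes it below -/
import Mathlib

section
/- Bowen's dimensional entropy scales under powers: for a continuous map f : X → X on a compact metrizable space, Y ⊂ X, and any integer m > 0, h_X(f^m, Y) = m · h_X(f, Y). -/
open Set Filter Topology
open scoped Classical ENNReal

variable {X : Type*} [TopologicalSpace X]

/-- A finite open cover of the space. -/
def IsFiniteOpenCover (U : Finset (Set X)) : Prop :=
  (∀ V ∈ U, IsOpen V) ∧ ⋃₀ (U : Set (Set X)) = Set.univ

/-- `E` is subordinate to the cover `U`: it is contained in an element of `U`. -/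
def Subord (U : Finset (Set X)) (E : Set X) : Prop := ∃ V ∈ U, E ⊆ V

/-- Bowen's `n_U(E)`: the largest `k` such that `f^j(E)` is subordinate to `U`
for all `0 ≤ j ≤ k` (and `0` if `E` itself is not subordinate). -/
noncomputable def bowenN (f : X → X) (U : Finset (Set X)) (E : Set X) : ℕ∞ :=
  if Subord U E then
    sSup {k : ℕ∞ | ∀ j : ℕ, (j : ℕ∞) ≤ k → Subord U (f^[j] '' E)}
  else 0

/-- The weight `exp(-lam * n)`, with the natural conventions at `n = ∞`. -/
noncomputable def expWeight (lam : ℝ) (n : ℕ∞) : ℝ≥0∞ :=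
  WithTop.recTopCoe (if 0 < lam then 0 else if lam < 0 then ⊤ else 1)
    (fun k : ℕ => ENNReal.ofReal (Real.exp (-lam * k))) n

/-- Bowen's measure `m_{U,lam}(Y)`. -/
noncomputable def bowenM (f : X → X) (U : Finset (Set X)) (lam : ℝ) (Y : Set X) : ℝ≥0∞ :=
  ⨆ N : ℕ, ⨅ (C : ℕ → Set X) (_ : Y ⊆ ⋃ i, C i)
    (_ : ∀ i, (N : ℕ∞) ≤ bowenN f U (C i)),
      ∑' i, expWeight lam (bowenN f U (C i))

/-- Bowen's entropy `h_U(f,Y) = inf { lam : m_{U,lam}(Y) = 0 }`. -/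
noncomputable def bowenHU (f : X → X) (U : Finset (Set X)) (Y : Set X) : EReal :=
  ⨅ (lam : ℝ) (_ : bowenM f U lam Y = 0), (lam : EReal)

/-- Bowen's dimensional entropy `h_X(f,Y)`. -/
noncomputable def bowenH (f : X → X) (Y : Set X) : EReal :=
  ⨆ (U : Finset (Set X)) (_ : IsFiniteOpenCover U), bowenHU f U Y

set_option linter.unusedSectionVars false
set_option maxHeartbeats 1000000
section Aux

lemma bowenN_eq_sSup (f : X → X) (U : Finset (Set X)) (E : Set X) :
    bowenN f U E = sSup {k : ℕ∞ | ∀ j : ℕ, (j : ℕ∞) ≤ k → Subord U (f^[j] '' E)} := by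
  rw [bowenN]
  split_ifs with h
  · rfl
  · have : {k : ℕ∞ | ∀ j : ℕ, (j : ℕ∞) ≤ k → Subord U (f^[j] '' E)} = ∅ := by
      ext k
      simp only [mem_setOf_eq, mem_empty_iff_false, iff_false, not_forall]
      exact ⟨0, by simpa using h⟩
    rw [this, sSup_empty]
    rfl

lemma le_bowenN {f : X → X} {U : Finset (Set X)} {E : Set X} {k : ℕ∞}
    (h : ∀ j : ℕ, (j : ℕ∞) ≤ k → Subord U (f^[j] '' E)) : k ≤ bowenN f U E := by
  rw [bowenN_eq_sSup]; exact le_sSup h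

lemma subord_of_bowenN_ne_zero {f : X → X} {U : Finset (Set X)} {E : Set X}
    (h : bowenN f U E ≠ 0) : Subord U E := by
  by_contra hS
  rw [bowenN, if_neg hS] at h
  exact h rfl

lemma subord_of_le_bowenN {f : X → X} {U : Finset (Set X)} {E : Set X}
    (hS : Subord U E) (j : ℕ) (hj : (j : ℕ∞) ≤ bowenN f U E) :
    Subord U (f^[j] '' E) := by
  by_contra hP
  have hj1 : j ≠ 0 := by
    rintro rfl
    simp only [Function.iterate_zero, image_id] at hP
    exact hP hS
  have hbound : bowenN f U E ≤ ((j - 1 : ℕ) : ℕ∞) := by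
    rw [bowenN_eq_sSup]
    apply sSup_le
    intro k hk
    by_contra hlt
    push_neg at hlt
    have : ((j - 1 : ℕ) : ℕ∞) + 1 ≤ k := Order.add_one_le_of_lt hlt
    have hjk : (j : ℕ∞) ≤ k := by
      have : ((j - 1 + 1 : ℕ) : ℕ∞) ≤ k := by push_cast; exact this
      rwa [Nat.sub_add_cancel (Nat.one_le_iff_ne_zero.mpr hj1)] at this
    exact hP (hk j hjk)
  have : (j : ℕ∞) ≤ ((j - 1 : ℕ) : ℕ∞) := hj.trans hbound
  rw [Nat.cast_le] at this
  omega

lemma le_bowenN_iterate {f : X → X} {U : Finset (Set X)} {E : Set X} {m : ℕ}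
    (hm : 0 < m) (hS : Subord U E) (j : ℕ)
    (hj : ((m * j : ℕ) : ℕ∞) ≤ bowenN f U E) :
    (j : ℕ∞) ≤ bowenN (f^[m]) U E := by
  apply le_bowenN
  intro i hi
  rw [Nat.cast_le] at hi
  rw [← Function.iterate_mul]
  exact subord_of_le_bowenN hS (m * i)
    (le_trans (by exact_mod_cast Nat.mul_le_mul_left m hi) hj)

lemma bowenN_le_mul {f : X → X} {U : Finset (Set X)} {E : Set X} {m : ℕ}
    (hm : 0 < m) (hS : Subord U E) :
    bowenN f U E ≤ (m : ℕ∞) * bowenN (f^[m]) U E + ((m - 1 : ℕ) : ℕ∞) := by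
  cases hn' : bowenN (f^[m]) U E with
  | top =>
    rw [ENat.mul_top (by exact_mod_cast hm.ne' : (m : ℕ∞) ≠ 0), top_add]
    exact le_top
  | coe k =>
    by_contra hlt
    push_neg at hlt
    have h1 : ((m * k + (m - 1) : ℕ) : ℕ∞) < bowenN f U E := by
      push_cast
      exact hlt
    have h2 : ((m * (k + 1) : ℕ) : ℕ∞) ≤ bowenN f U E := by
      have h3 : ((m * k + (m - 1) : ℕ) : ℕ∞) + 1 ≤ bowenN f U E := Order.add_one_le_of_lt h1
      calc ((m * (k + 1) : ℕ) : ℕ∞) = ((m * k + (m - 1) : ℕ) : ℕ∞) + 1 := by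
            rw [show m * (k + 1) = (m * k + (m - 1)) + 1 by
              rw [Nat.mul_succ]; generalize m * k = t; omega]
            rw [Nat.cast_add_one]
        _ ≤ _ := h3
    have := le_bowenN_iterate hm hS (k + 1) h2
    rw [hn', Nat.cast_le] at this
    omega

noncomputable def refineCover (f : X → X) (m : ℕ) (U : Finset (Set X)) : Finset (Set X) :=
  (Fintype.piFinset fun _ : Fin m => U).image fun g => ⋂ i : Fin m, f^[(i : ℕ)] ⁻¹' g i

lemma isFiniteOpenCover_refineCover {f : X → X} (hf : Continuous f) {m : ℕ}
    {U : Finset (Set X)} (hU : IsFiniteOpenCover U) :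
    IsFiniteOpenCover (refineCover f m U) := by
  constructor
  · intro V hV
    rw [refineCover, Finset.mem_image] at hV
    obtain ⟨g, hg, rfl⟩ := hV
    apply isOpen_iInter_of_finite
    intro i
    exact ((hU.1 _ (by simpa using (Fintype.mem_piFinset.mp hg i))).preimage
      (hf.iterate _))
  · apply eq_univ_of_forall
    intro x
    have hx : ∀ i : Fin m, ∃ V ∈ U, f^[(i : ℕ)] x ∈ V := by
      intro i
      have : f^[(i : ℕ)] x ∈ ⋃₀ (U : Set (Set X)) := by rw [hU.2]; trivial
      simpa [mem_sUnion] using this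
    choose g hgU hgx using hx
    refine ⟨⋂ i : Fin m, f^[(i : ℕ)] ⁻¹' g i, ?_, ?_⟩
    · rw [refineCover]
      simp only [Finset.coe_image, mem_image]
      exact ⟨g, by simpa [Fintype.mem_piFinset] using hgU, rfl⟩
    · exact mem_iInter.mpr fun i => hgx i

lemma subord_refineCover {f : X → X} {m : ℕ} {U : Finset (Set X)} {E : Set X}
    (h : Subord (refineCover f m U) E) :
    ∃ g : Fin m → Set X, (∀ i, g i ∈ U) ∧ ∀ i : Fin m, f^[(i : ℕ)] '' E ⊆ g i := by
  obtain ⟨V, hV, hEV⟩ := h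
  rw [refineCover, Finset.mem_image] at hV
  obtain ⟨g, hg, rfl⟩ := hV
  refine ⟨g, fun i => by simpa using (Fintype.mem_piFinset.mp hg i), fun i => ?_⟩
  rw [image_subset_iff]
  exact hEV.trans (iInter_subset _ i)

lemma mul_bowenN_refine_le {f : X → X} {U : Finset (Set X)} {E : Set X} {m : ℕ}
    (hm : 0 < m) (hS : Subord (refineCover f m U) E) :
    (m : ℕ∞) * bowenN (f^[m]) (refineCover f m U) E ≤ bowenN f U E := by
  apply le_bowenN
  intro j hj
  obtain ⟨q, r, hrm, rfl⟩ : ∃ q r, r < m ∧ j = m * q + r :=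
    ⟨j / m, j % m, Nat.mod_lt _ hm, (Nat.div_add_mod j m).symm⟩
  have hqn : (q : ℕ∞) ≤ bowenN (f^[m]) (refineCover f m U) E := by
    cases hn' : bowenN (f^[m]) (refineCover f m U) E with
    | top => exact le_top
    | coe k =>
      rw [hn'] at hj
      have h4 : ((m * q + r : ℕ) : ℕ∞) ≤ ((m * k : ℕ) : ℕ∞) := by push_cast; exact hj
      rw [Nat.cast_le] at h4
      rw [Nat.cast_le]
      exact Nat.le_of_mul_le_mul_left (le_trans (Nat.le_add_right _ _) h4) hm
  have hsub : Subord (refineCover f m U) ((f^[m])^[q] '' E) :=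
    subord_of_le_bowenN hS q hqn
  rw [← Function.iterate_mul] at hsub
  obtain ⟨g, hgU, hgsub⟩ := subord_refineCover hsub
  refine ⟨g ⟨r, hrm⟩, hgU _, ?_⟩
  have himg : f^[r] '' (f^[m * q] '' E) = f^[m * q + r] '' E := by
    rw [← image_comp, ← Function.iterate_add, Nat.add_comm r (m * q)]
  rw [← himg]
  exact hgsub ⟨r, hrm⟩

lemma expWeight_coe (lam : ℝ) (k : ℕ) :
    expWeight lam (k : ℕ∞) = ENNReal.ofReal (Real.exp (-lam * k)) := rfl

lemma expWeight_top (lam : ℝ) :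
    expWeight lam ⊤ = if 0 < lam then 0 else if lam < 0 then ⊤ else 1 := rfl

lemma expWeight_antitone {lam : ℝ} (hlam : 0 ≤ lam) {n n' : ℕ∞} (h : n ≤ n') :
    expWeight lam n' ≤ expWeight lam n := by
  cases n' with
  | top =>
    rcases eq_or_lt_of_le hlam with h0 | h0
    · cases n with
      | top => exact le_rfl
      | coe k =>
        rw [expWeight_top, if_neg (by rw [← h0]; exact lt_irrefl 0),
          if_neg (by rw [← h0]; exact lt_irrefl 0), expWeight_coe]
        rw [← h0]
        simp [ENNReal.one_le_ofReal, Real.one_le_exp_iff]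
    · rw [expWeight_top, if_pos h0]
      exact zero_le
  | coe k' =>
    obtain ⟨k, rfl, hk⟩ := ENat.le_coe_iff.mp h
    rw [expWeight_coe, expWeight_coe]
    apply ENNReal.ofReal_le_ofReal
    apply Real.exp_le_exp.mpr
    have : (k : ℝ) ≤ (k' : ℝ) := by exact_mod_cast hk
    nlinarith

lemma expWeight_mul {lam : ℝ} {m : ℕ} (hm : 0 < m) (n : ℕ∞) :
    expWeight ((m : ℝ) * lam) n = expWeight lam ((m : ℕ∞) * n) := by
  have hmR : (0 : ℝ) < (m : ℝ) := by exact_mod_cast hm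
  cases n with
  | top =>
    rw [ENat.mul_top (by exact_mod_cast hm.ne' : (m : ℕ∞) ≠ 0),
      expWeight_top, expWeight_top]
    split_ifs <;> first | rfl | (exfalso; nlinarith)
  | coe k =>
    rw [show (m : ℕ∞) * (k : ℕ∞) = ((m * k : ℕ) : ℕ∞) by push_cast; ring,
      expWeight_coe, expWeight_coe]
    congr 1
    push_cast
    ring

lemma expWeight_add_nat {lam : ℝ} (hlam : 0 < lam) (n : ℕ∞) (c : ℕ) :
    expWeight lam (n + (c : ℕ∞)) =
      expWeight lam n * ENNReal.ofReal (Real.exp (-lam * c)) := by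
  cases n with
  | top =>
    rw [top_add, expWeight_top, if_pos hlam, zero_mul]
  | coe k =>
    rw [show (k : ℕ∞) + (c : ℕ∞) = ((k + c : ℕ) : ℕ∞) by push_cast; ring,
      expWeight_coe, expWeight_coe, ← ENNReal.ofReal_mul (Real.exp_nonneg _),
      ← Real.exp_add]
    congr 2
    push_cast
    ring

lemma one_le_expWeight {lam : ℝ} (hlam : lam ≤ 0) (n : ℕ∞) :
    1 ≤ expWeight lam n := by
  cases n with
  | top =>
    rw [expWeight_top, if_neg (not_lt.mpr hlam)]
    split_ifs
    · exact le_top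
    · exact le_rfl
  | coe k =>
    rw [expWeight_coe]
    rw [ENNReal.one_le_ofReal, Real.one_le_exp_iff]
    have : (0 : ℝ) ≤ (k : ℝ) := Nat.cast_nonneg k
    nlinarith

noncomputable def bowenI (f : X → X) (U : Finset (Set X)) (lam : ℝ) (Y : Set X) (N : ℕ) :
    ℝ≥0∞ :=
  ⨅ (C : ℕ → Set X) (_ : Y ⊆ ⋃ i, C i)
    (_ : ∀ i, (N : ℕ∞) ≤ bowenN f U (C i)),
      ∑' i, expWeight lam (bowenN f U (C i))

lemma bowenM_eq (f : X → X) (U : Finset (Set X)) (lam : ℝ) (Y : Set X) :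
    bowenM f U lam Y = ⨆ N : ℕ, bowenI f U lam Y N := rfl

lemma pos_of_bowenM_eq_zero {f : X → X} {U : Finset (Set X)} {lam : ℝ} {Y : Set X}
    (h : bowenM f U lam Y = 0) : 0 < lam := by
  by_contra hl
  push_neg at hl
  have h0 : bowenI f U lam Y 0 = 0 :=
    le_antisymm (h ▸ (bowenM_eq f U lam Y ▸ le_iSup (bowenI f U lam Y) 0)) (zero_le)
  have htop : (⊤ : ℝ≥0∞) ≤ bowenI f U lam Y 0 := by
    refine le_iInf fun C => le_iInf fun _ => le_iInf fun _ => ?_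
    calc (⊤ : ℝ≥0∞) = ∑' _ : ℕ, (1 : ℝ≥0∞) :=
          (ENNReal.tsum_const_eq_top_of_ne_zero one_ne_zero).symm
      _ ≤ _ := ENNReal.tsum_le_tsum fun i => one_le_expWeight hl _
  rw [h0] at htop
  exact (not_le.mpr ENNReal.zero_lt_top) htop

lemma subord_of_cast_le {f : X → X} {U : Finset (Set X)} {E : Set X} {a : ℕ}
    (ha : 0 < a) (h : ((a : ℕ) : ℕ∞) ≤ bowenN f U E) : Subord U E := by
  apply subord_of_bowenN_ne_zero
  intro h0
  rw [h0] at h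
  have : a = 0 := by exact_mod_cast le_antisymm h (zero_le)
  omega

lemma bowenM_iterate_zero {f : X → X} {U : Finset (Set X)} {lam : ℝ} {Y : Set X} {m : ℕ}
    (hm : 0 < m) (hlam : 0 < lam) (h : bowenM f U lam Y = 0) :
    bowenM (f^[m]) U ((m : ℝ) * lam) Y = 0 := by
  set c : ℝ := ((m - 1 : ℕ) : ℝ) with hc
  set C0 : ℝ≥0∞ := ENNReal.ofReal (Real.exp (lam * c)) with hC0
  have hC0top : C0 ≠ ⊤ := ENNReal.ofReal_ne_top
  have hC0pos : C0 ≠ 0 := by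
    rw [hC0, ← ENNReal.ofReal_zero, Ne, ENNReal.ofReal_eq_ofReal_iff (Real.exp_pos _).le le_rfl]
    exact (Real.exp_pos _).ne'
  have hI : ∀ N : ℕ, bowenI f U lam Y N = 0 := fun N =>
    le_antisymm (h ▸ (bowenM_eq f U lam Y ▸ le_iSup (bowenI f U lam Y) N)) (zero_le)
  rw [bowenM_eq]
  apply le_antisymm _ (zero_le)
  refine iSup_le fun N => ?_
  -- key estimate against covers at level m*N+m
  have key : ∀ C : ℕ → Set X, Y ⊆ ⋃ i, C i →
      (∀ i, ((m * N + m : ℕ) : ℕ∞) ≤ bowenN f U (C i)) →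
      bowenI (f^[m]) U ((m : ℝ) * lam) Y N ≤ C0 * ∑' i, expWeight lam (bowenN f U (C i)) := by
    intro C hcov hlev
    have hSi : ∀ i, Subord U (C i) := fun i => subord_of_cast_le (by omega) (hlev i)
    have hlev' : ∀ i, (N : ℕ∞) ≤ bowenN (f^[m]) U (C i) := by
      intro i
      exact le_bowenN_iterate hm (hSi i)  N
        (le_trans (by exact_mod_cast Nat.le_add_right (m * N) m) (hlev i))
    refine le_trans (iInf_le_of_le C (iInf_le_of_le hcov (iInf_le_of_le hlev' le_rfl))) ?_
    rw [← ENNReal.tsum_mul_left]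
    refine ENNReal.tsum_le_tsum fun i => ?_
    -- pointwise weight bound
    rw [expWeight_mul hm]
    have hb := bowenN_le_mul hm (hSi i) (f := f) (E := C i)
    have h5 := expWeight_antitone hlam.le hb
    rw [expWeight_add_nat hlam] at h5
    calc expWeight lam ((m : ℕ∞) * bowenN (f^[m]) U (C i))
        = (expWeight lam ((m : ℕ∞) * bowenN (f^[m]) U (C i)) *
            ENNReal.ofReal (Real.exp (-lam * c))) * C0 := by
          rw [mul_assoc, hC0, ← ENNReal.ofReal_mul (Real.exp_nonneg _), ← Real.exp_add,
            (by ring : -lam * c + lam * c = 0), Real.exp_zero, ENNReal.ofReal_one, mul_one]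
      _ ≤ expWeight lam (bowenN f U (C i)) * C0 := mul_le_mul_left h5 _
      _ = C0 * expWeight lam (bowenN f U (C i)) := mul_comm _ _
  -- now the epsilon argument
  have hε : ∀ ε : ℝ≥0∞, 0 < ε → bowenI (f^[m]) U ((m : ℝ) * lam) Y N ≤ C0 * ε := by
    intro ε hε
    have h0 : bowenI f U lam Y (m * N + m) < ε := by rw [hI]; exact hε
    rw [bowenI] at h0
    simp only [iInf_lt_iff] at h0
    obtain ⟨C, hcov, hlev, hlt⟩ := h0
    exact (key C hcov hlev).trans (mul_le_mul_right hlt.le C0)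
  have hδ : ∀ δ : ℝ≥0∞, 0 < δ → bowenI (f^[m]) U ((m : ℝ) * lam) Y N ≤ δ := by
    intro δ hδ
    have := hε (C0⁻¹ * δ) (ENNReal.mul_pos (ENNReal.inv_ne_zero.mpr hC0top) hδ.ne')
    rwa [← mul_assoc, ENNReal.mul_inv_cancel hC0pos hC0top, one_mul] at this
  by_contra hne
  push_neg at hne
  have hpos : 0 < bowenI (f^[m]) U ((m : ℝ) * lam) Y N := hne
  have hfin : bowenI (f^[m]) U ((m : ℝ) * lam) Y N ≠ ⊤ := by
    intro htop
    have := hδ 1 one_pos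
    rw [htop] at this
    simp at this
  have := hδ _ (ENNReal.half_pos hpos.ne')
  exact absurd this (not_le.mpr (ENNReal.half_lt_self hpos.ne' hfin))

lemma bowenM_le_refine {f : X → X} {U : Finset (Set X)} {lam : ℝ} {Y : Set X} {m : ℕ}
    (hm : 0 < m) (hlam : 0 < lam) :
    bowenM f U lam Y ≤ bowenM (f^[m]) (refineCover f m U) ((m : ℝ) * lam) Y := by
  rw [bowenM_eq, bowenM_eq]
  refine iSup_le fun N => le_iSup_of_le (N + 1) ?_
  refine le_iInf fun C => le_iInf fun hcov => le_iInf fun hlev => ?_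
  have hSi : ∀ i, Subord (refineCover f m U) (C i) := fun i =>
    subord_of_cast_le (by omega) (hlev i)
  have hE : ∀ i, (m : ℕ∞) * bowenN (f^[m]) (refineCover f m U) (C i) ≤ bowenN f U (C i) :=
    fun i => mul_bowenN_refine_le hm (hSi i)
  have hlev' : ∀ i, (N : ℕ∞) ≤ bowenN f U (C i) := by
    intro i
    calc (N : ℕ∞) ≤ ((N + 1 : ℕ) : ℕ∞) := by exact_mod_cast Nat.le_succ N
      _ ≤ bowenN (f^[m]) (refineCover f m U) (C i) := hlev i
      _ ≤ (m : ℕ∞) * bowenN (f^[m]) (refineCover f m U) (C i) :=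
          le_mul_of_one_le_left (zero_le) (by exact_mod_cast hm)
      _ ≤ bowenN f U (C i) := hE i
  refine le_trans (iInf_le_of_le C (iInf_le_of_le hcov (iInf_le_of_le hlev' le_rfl))) ?_
  refine ENNReal.tsum_le_tsum fun i => ?_
  rw [expWeight_mul hm]
  exact expWeight_antitone hlam.le (hE i)

lemma ereal_le_of_forall_real {a b : EReal} (h : ∀ r : ℝ, b < (r : EReal) → a ≤ (r : EReal)) :
    a ≤ b := by
  by_contra hab
  push_neg at hab
  obtain ⟨r, hbr, hra⟩ := EReal.exists_between_coe_real hab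
  exact absurd (h r hbr) (not_le.mpr hra)

end Aux

/-- Bowen's dimensional entropy scales under powers. -/
theorem bowenH_iterate {X : Type*} [TopologicalSpace X] [CompactSpace X]
    [TopologicalSpace.MetrizableSpace X]
    (f : X → X) (hf : Continuous f) (Y : Set X) (m : ℕ) (hm : 0 < m) :
    bowenH (f^[m]) Y = (m : EReal) * bowenH f Y := by
  have hmR : (0 : ℝ) < (m : ℝ) := by exact_mod_cast hm
  have hcast : (m : EReal) = ((m : ℝ) : EReal) := by norm_cast
  apply le_antisymm
  · -- h(f^m) ≤ m h(f)
    apply ereal_le_of_forall_real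
    intro r hr
    have hAr : bowenH f Y < ((r / m : ℝ) : EReal) := by
      rw [hcast] at hr
      generalize hA : bowenH f Y = A at hr ⊢
      induction A using EReal.rec with
      | bot => exact EReal.bot_lt_coe _
      | coe a =>
        rw [← EReal.coe_mul] at hr
        rw [EReal.coe_lt_coe_iff] at hr ⊢
        rw [lt_div_iff₀ hmR]
        nlinarith
      | top =>
        rw [EReal.coe_mul_top_of_pos hmR] at hr
        exact absurd hr (not_lt.mpr le_top)
    rw [bowenH]
    refine iSup_le fun U => iSup_le fun hU => ?_
    have h1 : bowenHU f U Y < ((r / m : ℝ) : EReal) :=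
      lt_of_le_of_lt (le_iSup₂ (f := fun (U : Finset (Set X)) (_ : IsFiniteOpenCover U) =>
        bowenHU f U Y) U hU) hAr
    rw [bowenHU] at h1
    simp only [iInf_lt_iff] at h1
    obtain ⟨lam, hM, hlt⟩ := h1
    have hpos := pos_of_bowenM_eq_zero hM
    have h2 : bowenM (f^[m]) U ((m : ℝ) * lam) Y = 0 := bowenM_iterate_zero hm hpos hM
    refine le_trans (iInf₂_le (f := fun (lam : ℝ) (_ : bowenM (f^[m]) U lam Y = 0) =>
      (lam : EReal)) _ h2) ?_
    rw [EReal.coe_le_coe_iff]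
    rw [EReal.coe_lt_coe_iff] at hlt
    rw [lt_div_iff₀ hmR] at hlt
    nlinarith
  · -- m h(f) ≤ h(f^m)
    apply ereal_le_of_forall_real
    intro r hr
    suffices hA : bowenH f Y ≤ ((r / m : ℝ) : EReal) by
      rw [hcast]
      generalize hB : bowenH f Y = A at hA ⊢
      induction A using EReal.rec with
      | bot => rw [EReal.coe_mul_bot_of_pos hmR]; exact bot_le
      | coe a =>
        rw [← EReal.coe_mul, EReal.coe_le_coe_iff]
        rw [EReal.coe_le_coe_iff] at hA
        calc (m : ℝ) * a ≤ (m : ℝ) * (r / m) := by nlinarith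
          _ = r := by field_simp
      | top => exact absurd hA (not_le.mpr (EReal.coe_lt_top _))
    rw [bowenH]
    refine iSup_le fun U => iSup_le fun hU => ?_
    have hUr : IsFiniteOpenCover (refineCover f m U) := isFiniteOpenCover_refineCover hf hU
    have h1 : bowenHU (f^[m]) (refineCover f m U) Y < (r : EReal) :=
      lt_of_le_of_lt (le_iSup₂ (f := fun (V : Finset (Set X)) (_ : IsFiniteOpenCover V) =>
        bowenHU (f^[m]) V Y) (refineCover f m U) hUr) hr
    rw [bowenHU] at h1
    simp only [iInf_lt_iff] at h1
    obtain ⟨lam', hM', hlt'⟩ := h1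
    have hpos' := pos_of_bowenM_eq_zero hM'
    have heq : (m : ℝ) * (lam' / m) = lam' := by field_simp
    have hM2 : bowenM f U (lam' / m) Y = 0 := by
      have hle := bowenM_le_refine (f := f) (U := U) (lam := lam' / m) (Y := Y) hm
        (div_pos hpos' hmR)
      rw [heq, hM'] at hle
      exact le_antisymm hle (zero_le)
    refine le_trans (iInf₂_le (f := fun (lam : ℝ) (_ : bowenM f U lam Y = 0) =>
      (lam : EReal)) _ hM2) ?_
    rw [EReal.coe_le_coe_iff]
    rw [EReal.coe_lt_coe_iff] at hlt'
    exact (div_le_div_iff_of_pos_right hmR).mpr hlt'.le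
end

section
/- Let π : Z → X be a one-block factor map between SFTs with Φ^{-1}(b) = {a} for a symbol b (a magic symbol with unique preimage symbol), and suppose π is left-closing with closing constant K (i.e., if π(z)[−K,K] = π(z')[−K,K] and z[0,K] = z'[0,K] then z_{−1} = z'_{−1}). Let Z' = { z ∈ Z : z_n = a for infinitely many n ≥ 0 and infinitely many n ≤ 0 } and X' = π(Z'). Then the restriction π|_{Z'} : Z' → X' is a homeomorphism (with respect to the subspace topologies), and in particular its inverse is continuous: for every x ∈ X' there exists N such that x[−N,N] determines π^{-1}(x)_0. -/
open Set Filter Topology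

/-- The shift map on bi-infinite sequences. -/
def shiftMap {A : Type*} : (ℤ → A) → (ℤ → A) := fun x n => x (n + 1)

/-- The inverse shift map. -/
def shiftInv {A : Type*} : (ℤ → A) → (ℤ → A) := fun x n => x (n - 1)

/-- A subshift: a closed, shift-invariant subset of the full shift. -/
def IsSubshift {A : Type*} [TopologicalSpace A] (Z : Set (ℤ → A)) : Prop :=
  IsClosed Z ∧ shiftMap '' Z = Z

/-- The set `W_n(Y)` of words of length `n` appearing (at position `0`) in points of `Y`. -/
def wordSet {A : Type*} (n : ℕ) (Y : Set (ℤ → A)) : Set (Fin n → A) :=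
  { w | ∃ y ∈ Y, ∀ i : Fin n, y (i : ℤ) = w i }

section Aux

variable {A B : Type*} (T : A → A → Prop) (Φ : A → B) (a : A) (b : B) (K : ℕ)

/-- The SFT determined by the transition relation `T`. -/
def transSet (T : A → A → Prop) : Set (ℤ → A) := {z : ℤ → A | ∀ i : ℤ, T (z i) (z (i + 1))}

theorem mem_transSet {T : A → A → Prop} {z : ℤ → A} :
    z ∈ transSet T ↔ ∀ i : ℤ, T (z i) (z (i + 1)) := Iff.rfl



/-- one closing step at an arbitrary position `m`. -/
theorem stepA
    (hK : ∀ z ∈ transSet T, ∀ z' ∈ transSet T,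
      (∀ i : ℤ, -(K : ℤ) ≤ i → i ≤ (K : ℤ) → Φ (z i) = Φ (z' i)) →
      (∀ i : ℤ, 0 ≤ i → i ≤ (K : ℤ) → z i = z' i) → z (-1) = z' (-1))
    {z z' : ℤ → A} (hz : z ∈ transSet T) (hz' : z' ∈ transSet T) (m : ℤ)
    (himg : ∀ i : ℤ, m - K ≤ i → i ≤ m + K → Φ (z i) = Φ (z' i))
    (hpt : ∀ i : ℤ, m ≤ i → i ≤ m + K → z i = z' i) :
    z (m - 1) = z' (m - 1) := by
  have hzs : (fun i => z (i + m)) ∈ transSet T := by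
    intro i
    have := hz (i + m)
    simpa [add_right_comm] using this
  have hzs' : (fun i => z' (i + m)) ∈ transSet T := by
    intro i
    have := hz' (i + m)
    simpa [add_right_comm] using this
  have := hK _ hzs _ hzs'
    (fun i h1 h2 => himg (i + m) (by omega) (by omega))
    (fun i h1 h2 => hpt (i + m) (by omega) (by omega))
  simpa [show (-1 : ℤ) + m = m - 1 by ring] using this

/-- propagation: equality on `[n, ∞)` plus image agreement on `[M, ∞)`
propagates down to `[M+K, ∞)`. -/
theorem propagate
    (hK : ∀ z ∈ transSet T, ∀ z' ∈ transSet T,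
      (∀ i : ℤ, -(K : ℤ) ≤ i → i ≤ (K : ℤ) → Φ (z i) = Φ (z' i)) →
      (∀ i : ℤ, 0 ≤ i → i ≤ (K : ℤ) → z i = z' i) → z (-1) = z' (-1))
    {z z' : ℤ → A} (hz : z ∈ transSet T) (hz' : z' ∈ transSet T) (M n : ℤ)
    (himg : ∀ i : ℤ, M ≤ i → Φ (z i) = Φ (z' i))
    (hpt : ∀ i : ℤ, n ≤ i → z i = z' i) :
    ∀ i : ℤ, M + K ≤ i → z i = z' i := by
  have key : ∀ d : ℕ, ∀ i : ℤ, M + K ≤ i → n - d ≤ i → z i = z' i := by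
    intro d
    induction d with
    | zero => intro i _ h2; exact hpt i (by omega)
    | succ d ih =>
      intro i h1 h2
      by_cases hc : n - d ≤ i
      · exact ih i h1 hc
      · have hieq : i = n - d - 1 := by omega
        have := stepA T Φ K hK hz hz' (n - d)
          (fun j hj1 hj2 => himg j (by omega))
          (fun j hj1 hj2 => ih j (by omega) (by omega))
        rw [hieq]; exact this
  intro i h1
  exact key (n - i).toNat i h1 (by omega)

/-- splicing two points of `transSet T` at a common symbol. -/
theorem splice_mem
    {z z' : ℤ → A} (hz : z ∈ transSet T) (hz' : z' ∈ transSet T) (n : ℤ) (hn : z n = z' n) :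
    (fun j => if j < n then z j else z' j) ∈ transSet T := by
  intro j
  by_cases h1 : j + 1 < n
  · simp only [if_pos h1, if_pos (show j < n by omega)]
    exact hz j
  · by_cases h2 : j < n
    · have hjn : j + 1 = n := by omega
      simp only [if_pos h2, if_neg h1]
      have : z' (j + 1) = z (j + 1) := by rw [hjn, ← hn]
      rw [this]; exact hz j
    · simp only [if_neg h1, if_neg h2]
      exact hz' j

theorem magic_symbol {Φ : A → B} {a : A} {b : B} (hb : Φ ⁻¹' {b} = {a}) :
    Φ a = b := by
  have : a ∈ Φ ⁻¹' {b} := by rw [hb]; exact rfl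
  simpa using this

theorem magic_unique {Φ : A → B} {a c : A} {b : B} (hb : Φ ⁻¹' {b} = {a})
    (hc : Φ c = b) : c = a := by
  have : c ∈ Φ ⁻¹' {b} := hc
  rw [hb] at this; simpa using this

/-- injectivity: if `z` sees `a` at arbitrarily large positive times and
`Φ ∘ z = Φ ∘ z'`, then `z = z'`. -/
theorem inj_on_magic
    (hb : Φ ⁻¹' {b} = {a})
    (hK : ∀ z ∈ transSet T, ∀ z' ∈ transSet T,
      (∀ i : ℤ, -(K : ℤ) ≤ i → i ≤ (K : ℤ) → Φ (z i) = Φ (z' i)) →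
      (∀ i : ℤ, 0 ≤ i → i ≤ (K : ℤ) → z i = z' i) → z (-1) = z' (-1))
    {z z' : ℤ → A} (hz : z ∈ transSet T) (hz' : z' ∈ transSet T)
    (hmag : ∀ N : ℤ, ∃ n : ℤ, N ≤ n ∧ z n = a)
    (himg : ∀ i : ℤ, Φ (z i) = Φ (z' i)) : z = z' := by
  funext i
  obtain ⟨n, hn1, hn2⟩ := hmag (i + 1)
  have hz'n : z' n = a := magic_unique hb (by rw [← himg n, hn2, magic_symbol hb])
  set w : ℤ → A := fun j => if j < n then z j else z' j with hw
  have hwZ : w ∈ transSet T := splice_mem T hz hz' n (by rw [hn2, hz'n])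
  have hwimg : ∀ j : ℤ, (i - K : ℤ) ≤ j → Φ (w j) = Φ (z' j) := by
    intro j _
    by_cases h : j < n
    · simp only [hw, if_pos h]; exact himg j
    · simp only [hw, if_neg h]
  have hwpt : ∀ j : ℤ, n ≤ j → w j = z' j := by
    intro j hj; simp only [hw, if_neg (show ¬ j < n by omega)]
  have := propagate T Φ K hK hwZ hz' (i - K) n hwimg hwpt i (by omega)
  have hwi : w i = z i := by simp only [hw, if_pos (show i < n by omega)]
  rw [← hwi, this]

/-- local determination: a finite window of the image determines each
coordinate of the preimage. -/
theorem determine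
    (hb : Φ ⁻¹' {b} = {a})
    (hK : ∀ z ∈ transSet T, ∀ z' ∈ transSet T,
      (∀ i : ℤ, -(K : ℤ) ≤ i → i ≤ (K : ℤ) → Φ (z i) = Φ (z' i)) →
      (∀ i : ℤ, 0 ≤ i → i ≤ (K : ℤ) → z i = z' i) → z (-1) = z' (-1))
    {z : ℤ → A} (hz : z ∈ transSet T)
    (hmag : ∀ N : ℤ, ∃ n : ℤ, N ≤ n ∧ z n = a) (k : ℤ) :
    ∃ N : ℕ, ∀ z' ∈ transSet T,
      (∀ i : ℤ, -(N : ℤ) ≤ i → i ≤ (N : ℤ) → Φ (z' i) = Φ (z i)) →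
      z' k = z k := by
  obtain ⟨n, hn1, hn2⟩ := hmag (max (k + 1) 0)
  refine ⟨n.toNat + K + k.natAbs, ?_⟩
  intro z' hz' hwin
  set N : ℕ := n.toNat + K + k.natAbs with hN
  have hnN : n ≤ (N : ℤ) ∧ -(N : ℤ) ≤ n := by constructor <;> omega
  have hz'n : z' n = a :=
    magic_unique hb (by rw [hwin n hnN.2 hnN.1, hn2, magic_symbol hb])
  set w : ℤ → A := fun j => if j < n then z' j else z j with hw
  have hwZ : w ∈ transSet T := splice_mem T hz' hz n (by rw [hz'n, hn2])
  have hwimg : ∀ j : ℤ, -(N : ℤ) ≤ j → Φ (w j) = Φ (z j) := by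
    intro j hj
    by_cases h : j < n
    · simp only [hw, if_pos h]; exact hwin j hj (by omega)
    · simp only [hw, if_neg h]
  have hwpt : ∀ j : ℤ, n ≤ j → w j = z j := by
    intro j hj; simp only [hw, if_neg (show ¬ j < n by omega)]
  have := propagate T Φ K hK hwZ hz (-(N : ℤ)) n hwimg hwpt k (by omega)
  have hwk : w k = z' k := by simp only [hw, if_pos (show k < n by omega)]
  rw [← hwk, this]

end Aux

/-- Continuity of any right inverse of the factor map, from `determine`. -/
theorem cont_preimage {A B : Type*}
    [TopologicalSpace A] [DiscreteTopology A] [TopologicalSpace B] [DiscreteTopology B]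
    (T : A → A → Prop) (Φ : A → B) (a : A) (b : B) (hb : Φ ⁻¹' {b} = {a}) (K : ℕ)
    (hK : ∀ z ∈ transSet T, ∀ z' ∈ transSet T,
      (∀ i : ℤ, -(K : ℤ) ≤ i → i ≤ (K : ℤ) → Φ (z i) = Φ (z' i)) →
      (∀ i : ℤ, 0 ≤ i → i ≤ (K : ℤ) → z i = z' i) → z (-1) = z' (-1))
    (S : Set (ℤ → B)) (g : S → (ℤ → A))
    (hg1 : ∀ x, g x ∈ transSet T)
    (hg2 : ∀ x, ∀ N : ℤ, ∃ n : ℤ, N ≤ n ∧ g x n = a)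
    (hg3 : ∀ x, ∀ i : ℤ, Φ (g x i) = x.val i) :
    Continuous g := by
  apply continuous_pi
  intro k
  rw [continuous_iff_continuousAt]
  intro x
  rw [ContinuousAt, nhds_discrete A, tendsto_pure]
  obtain ⟨N, hN⟩ := determine T Φ a b K hb hK (hg1 x) (hg2 x) k
  have hU : {y : ℤ → B | ∀ i ∈ Finset.Icc (-(N : ℤ)) (N : ℤ), y i = x.val i} ∈
      𝓝 x.val := by
    have hop : IsOpen {y : ℤ → B | ∀ i ∈ Finset.Icc (-(N : ℤ)) (N : ℤ), y i = x.val i} := by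
      have heq : {y : ℤ → B | ∀ i ∈ Finset.Icc (-(N : ℤ)) (N : ℤ), y i = x.val i} =
          Set.pi (↑(Finset.Icc (-(N : ℤ)) (N : ℤ))) (fun i => {x.val i}) := by
        ext y; simp [Set.pi]
      rw [heq]
      exact isOpen_set_pi (Finset.finite_toSet _) (fun i _ => isOpen_discrete _)
    exact hop.mem_nhds (fun i _ => rfl)
  have hV : {x' : S | ∀ i ∈ Finset.Icc (-(N : ℤ)) (N : ℤ), x'.val i = x.val i} ∈ 𝓝 x := by
    rw [nhds_induced]
    exact Filter.preimage_mem_comap hU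
  filter_upwards [hV] with x' hx'
  apply hN _ (hg1 x')
  intro i hi1 hi2
  rw [hg3 x' i, hg3 x i]
  exact hx' i (Finset.mem_Icc.2 ⟨hi1, hi2⟩)

/-- for a left-closing one-block factor map with magic symbol `b` whose
unique preimage symbol is `a`, the restriction of the map to the set `Z'` of points seeing
`a` infinitely often in both time directions is a homeomorphism onto its image `X'`;
in particular the inverse is continuous: a finite central window of `x ∈ X'` determines
the zero coordinate of its preimage. -/
theorem oneBlock_restriction_homeomorph {A B : Type*} [Fintype A] [Fintype B]
    [TopologicalSpace A] [DiscreteTopology A] [TopologicalSpace B] [DiscreteTopology B]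
    (T : A → A → Prop) (Z : Set (ℤ → A))
    (hZdef : Z = {z : ℤ → A | ∀ i : ℤ, T (z i) (z (i + 1))})
    (Φ : A → B) (a : A) (b : B) (hb : Φ ⁻¹' {b} = {a})
    (K : ℕ)
    -- left-closing with closing constant `K`
    (hK : ∀ z ∈ Z, ∀ z' ∈ Z,
      (∀ i : ℤ, -(K : ℤ) ≤ i → i ≤ (K : ℤ) → Φ (z i) = Φ (z' i)) →
      (∀ i : ℤ, 0 ≤ i → i ≤ (K : ℤ) → z i = z' i) → z (-1) = z' (-1)) :
    ∃ e : ({z ∈ Z | (∀ N : ℤ, ∃ n : ℤ, N ≤ n ∧ z n = a) ∧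
              (∀ N : ℤ, ∃ n : ℤ, n ≤ N ∧ z n = a)} : Set (ℤ → A)) ≃ₜ
          ((fun z : ℤ → A => fun n : ℤ => Φ (z n)) ''
            {z ∈ Z | (∀ N : ℤ, ∃ n : ℤ, N ≤ n ∧ z n = a) ∧
              (∀ N : ℤ, ∃ n : ℤ, n ≤ N ∧ z n = a)} : Set (ℤ → B)),
      (∀ z, ((e z : ℤ → B)) = fun n : ℤ => Φ ((z : ℤ → A) n)) ∧
      (∀ x ∈ (fun z : ℤ → A => fun n : ℤ => Φ (z n)) ''
            {z ∈ Z | (∀ N : ℤ, ∃ n : ℤ, N ≤ n ∧ z n = a) ∧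
              (∀ N : ℤ, ∃ n : ℤ, n ≤ N ∧ z n = a)},
        ∃ N : ℕ, ∀ x' ∈ (fun z : ℤ → A => fun n : ℤ => Φ (z n)) ''
            {z ∈ Z | (∀ N : ℤ, ∃ n : ℤ, N ≤ n ∧ z n = a) ∧
              (∀ N : ℤ, ∃ n : ℤ, n ≤ N ∧ z n = a)},
          (∀ i : ℤ, -(N : ℤ) ≤ i → i ≤ (N : ℤ) → x' i = x i) →
          ∀ z ∈ {z ∈ Z | (∀ N : ℤ, ∃ n : ℤ, N ≤ n ∧ z n = a) ∧
              (∀ N : ℤ, ∃ n : ℤ, n ≤ N ∧ z n = a)},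
          ∀ z' ∈ {z ∈ Z | (∀ N : ℤ, ∃ n : ℤ, N ≤ n ∧ z n = a) ∧
              (∀ N : ℤ, ∃ n : ℤ, n ≤ N ∧ z n = a)},
            (fun n : ℤ => Φ (z n)) = x → (fun n : ℤ => Φ (z' n)) = x' →
            z 0 = z' 0) := by
  have hZ : Z = transSet T := hZdef
  subst hZ
  set Z' : Set (ℤ → A) := {z ∈ transSet T | (∀ N : ℤ, ∃ n : ℤ, N ≤ n ∧ z n = a) ∧
      (∀ N : ℤ, ∃ n : ℤ, n ≤ N ∧ z n = a)} with hZ'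
  set π : (ℤ → A) → (ℤ → B) := fun z => fun n : ℤ => Φ (z n) with hπ
  -- injectivity of `π` on `Z'`
  have hinj : ∀ z ∈ Z', ∀ z' ∈ Z', π z = π z' → z = z' := by
    intro z hz z' hz' h
    exact inj_on_magic T Φ a b K hb hK hz.1 hz'.1 hz.2.1 (fun i => congrFun h i)
  -- the forward map
  have hfmem : ∀ z : Z', π z.val ∈ π '' Z' := fun z => ⟨z.val, z.2, rfl⟩
  set f : Z' → (π '' Z' : Set (ℤ → B)) := fun z => ⟨π z.val, hfmem z⟩ with hf
  have hfbij : Function.Bijective f := by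
    constructor
    · intro z z' h
      exact Subtype.ext (hinj z.val z.2 z'.val z'.2 (congrArg Subtype.val h))
    · rintro ⟨x, zz, hzz, hx⟩
      exact ⟨⟨zz, hzz⟩, Subtype.ext hx⟩
  set E : Z' ≃ (π '' Z' : Set (ℤ → B)) := Equiv.ofBijective f hfbij with hE
  -- key properties of the inverse
  have hEsymm_img : ∀ x : (π '' Z' : Set (ℤ → B)), π (E.symm x).val = x.val := by
    intro x
    have := E.apply_symm_apply x
    exact congrArg Subtype.val this
  -- continuity of the forward map
  have hcontf : Continuous f := by
    apply Continuous.subtype_mk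
    exact continuous_pi fun n =>
      (continuous_of_discreteTopology (f := Φ)).comp
        ((continuous_apply n).comp continuous_subtype_val)
  -- continuity of the inverse map
  have hcontinv : Continuous E.symm := by
    apply continuous_induced_rng.2
    exact cont_preimage T Φ a b hb K hK _ (fun x => (E.symm x).val)
      (fun x => (E.symm x).2.1) (fun x => (E.symm x).2.2.1)
      (fun x i => congrFun (hEsymm_img x) i)
  refine ⟨⟨E, hcontf, hcontinv⟩, fun z => rfl, ?_⟩
  -- the window determination statement
  rintro x ⟨z₀, hz₀, hz₀x⟩
  obtain ⟨N, hN⟩ := determine T Φ a b K hb hK hz₀.1 hz₀.2.1 0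
  refine ⟨N, ?_⟩
  rintro x' ⟨w, hw, hwx'⟩ hwin z hz z' hz' hzx hz'x'
  have hzz₀ : z = z₀ := hinj z hz z₀ hz₀ (hzx.trans hz₀x.symm)
  have : z' 0 = z₀ 0 := by
    apply hN _ hz'.1
    intro i hi1 hi2
    have e1 : Φ (z' i) = x' i := congrFun hz'x' i
    have e2 : Φ (z₀ i) = x i := congrFun hz₀x i
    rw [e1, e2]
    exact hwin i hi1 hi2
  rw [hzz₀, this]
end
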